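/- arXiv:2301.00040 — 3 statements merged into one kernel-verified Lean document; each statement's English description precedes it below -/
import Mathlib

section
/- Recursion of partial correlation: let H be a real Hilbert space, Z a complete subspace, and y, x, w ∈ H such that y^{⊥Z}, x^{⊥Z}, w^{⊥Z} are nonzero and y^{⊥span(w)+Z} ≠ 0, x^{⊥span(w)+Z} ≠ 0 (in particular R²_{y∼w|Z} < 1 and R²_{x∼w|Z} < 1). Then R_{y∼x|span(w)+Z} = (R_{y∼x|Z} − R_{y∼w|Z}·R_{x∼w|Z})/(√(1 − R_{y∼w|Z}²)·√(1 − R_{x∼w|Z}²)). -/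
/-!
R²-calculus in real Hilbert spaces (Freidling & Zhao, "Optimization-based
Sensitivity Analysis for Unmeasured Confounding using Partial Correlations").
-/

noncomputable section

open Submodule RealInnerProductSpace

variable {H : Type*} [NormedAddCommGroup H] [InnerProductSpace ℝ H]

/-- The residual `h^{⊥M} = h − P_M h` of `h` after projecting onto `M`. -/
def resid (M : Submodule ℝ H) [HasOrthogonalProjection M] (h : H) : H :=
  h - (orthogonalProjection M h : H)

/-- The marginal R²-value `R²_{y∼X} = 1 − ‖y^{⊥X}‖²/‖y‖²`. -/
def R2 (y : H) (X : Submodule ℝ H) [HasOrthogonalProjection X] : ℝ :=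
  1 - ‖resid X y‖ ^ 2 / ‖y‖ ^ 2

/-- The partial R²-value `R²_{y∼X|Z} = (R²_{y∼X+Z} − R²_{y∼Z})/(1 − R²_{y∼Z})`. -/
def R2p (y : H) (X Z : Submodule ℝ H) [HasOrthogonalProjection (X ⊔ Z)]
    [HasOrthogonalProjection Z] : ℝ :=
  (R2 y (X ⊔ Z) - R2 y Z) / (1 - R2 y Z)

/-- The partial R-value `R_{y∼x|Z} = ⟪y^{⊥Z}, x^{⊥Z}⟫/(‖y^{⊥Z}‖·‖x^{⊥Z}‖)`. -/
def Rp (y x : H) (Z : Submodule ℝ H) [HasOrthogonalProjection Z] : ℝ :=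
  ⟪resid Z y, resid Z x⟫ / (‖resid Z y‖ * ‖resid Z x‖)

/-- The partial f-value `f_{y∼x|Z} = R_{y∼x|Z}/√(1 − R²_{y∼x|Z})`. -/
def fp (y x : H) (Z : Submodule ℝ H) [HasOrthogonalProjection Z] : ℝ :=
  Rp y x Z / Real.sqrt (1 - Rp y x Z ^ 2)

/-- The regression estimand `β_{y∼d|M} = ⟪y^{⊥M}, d^{⊥M}⟫/‖d^{⊥M}‖²`. -/
def betaReg (y d : H) (M : Submodule ℝ H) [HasOrthogonalProjection M] : ℝ :=
  ⟪resid M y, resid M d⟫ / ‖resid M d‖ ^ 2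

/-- `σ_{y∼M} = ‖y^{⊥M}‖`. -/
def sigv (y : H) (M : Submodule ℝ H) [HasOrthogonalProjection M] : ℝ :=
  ‖resid M y‖

lemma resid_mem_orthogonal (M : Submodule ℝ H) [HasOrthogonalProjection M] (h : H) :
    resid M h ∈ Mᗮ := by
  have := sub_starProjection_mem_orthogonal (K := M) h
  rwa [starProjection_apply] at this

lemma resid_sup_span [CompleteSpace H] (Z : Submodule ℝ H) [CompleteSpace Z] (w : H)
    [CompleteSpace ↥((ℝ ∙ w) ⊔ Z)] (hw : resid Z w ≠ 0) (h : H) :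
    resid ((ℝ ∙ w) ⊔ Z) h =
      resid Z h - (⟪resid Z h, resid Z w⟫ / ‖resid Z w‖ ^ 2) • resid Z w := by
  set c := resid Z w with hc
  set a := resid Z h with ha
  set t := ⟪a, c⟫ / ‖c‖ ^ 2 with ht
  have hc2 : ‖c‖ ^ 2 ≠ 0 := pow_ne_zero _ (norm_ne_zero_iff.2 hw)
  have hv : (orthogonalProjection Z h : H) + t • c ∈ (ℝ ∙ w) ⊔ Z := by
    apply add_mem
    · exact le_sup_right (α := Submodule ℝ H) (coe_mem _)
    · have : t • c = t • w - t • (orthogonalProjection Z w : H) := by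
        rw [hc, resid, smul_sub]
      rw [this]
      exact sub_mem (le_sup_left (α := Submodule ℝ H)
        (smul_mem _ _ (mem_span_singleton_self w)))
        (le_sup_right (α := Submodule ℝ H) (smul_mem _ _ (coe_mem _)))
  have key : (orthogonalProjection ((ℝ ∙ w) ⊔ Z) h : H)
      = (orthogonalProjection Z h : H) + t • c := by
    rw [← starProjection_apply]
    apply eq_starProjection_of_mem_of_inner_eq_zero hv
    intro u hu
    rw [Submodule.mem_sup] at hu
    obtain ⟨u1, hu1, u2, hu2, rfl⟩ := hu
    obtain ⟨s, rfl⟩ := mem_span_singleton.1 hu1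
    have haZ : ∀ z ∈ Z, ⟪a, z⟫ = 0 := fun z hz => by
      rw [real_inner_comm]; exact (resid_mem_orthogonal Z h) z hz
    have hcZ : ∀ z ∈ Z, ⟪c, z⟫ = 0 := fun z hz => by
      rw [real_inner_comm]; exact (resid_mem_orthogonal Z w) z hz
    have hdiff : h - ((orthogonalProjection Z h : H) + t • c) = a - t • c := by
      rw [ha, resid]; abel
    rw [hdiff]
    have hw' : (w : H) = c + (orthogonalProjection Z w : H) := by rw [hc, resid]; abel
    rw [hw']
    simp only [inner_add_right, inner_smul_right, inner_sub_left, inner_smul_left,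
      RCLike.star_def, conj_trivial]
    have h1 : ⟪a, (orthogonalProjection Z w : H)⟫ = 0 := haZ _ (coe_mem _)
    have h2 : ⟪c, (orthogonalProjection Z w : H)⟫ = 0 := hcZ _ (coe_mem _)
    have h3 : ⟪a, u2⟫ = 0 := haZ _ hu2
    have h4 : ⟪c, u2⟫ = 0 := hcZ _ hu2
    have h5 : ⟪c, c⟫ = ‖c‖ ^ 2 := real_inner_self_eq_norm_sq c
    rw [h1, h2, h3, h4, h5]
    field_simp [ht]
    rw [ht, div_mul_cancel₀ _ hc2]
    ring
  rw [resid, key, ha, resid]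
  abel

/-- recursion of partial correlation. -/
theorem partial_R_recursion [CompleteSpace H]
    (Z : Submodule ℝ H) [CompleteSpace Z] (y x w : H)
    [CompleteSpace ↥((ℝ ∙ w) ⊔ Z)]
    (hy : resid Z y ≠ 0) (hx : resid Z x ≠ 0) (hw : resid Z w ≠ 0)
    (hy2 : resid ((ℝ ∙ w) ⊔ Z) y ≠ 0) (hx2 : resid ((ℝ ∙ w) ⊔ Z) x ≠ 0) :
    Rp y x ((ℝ ∙ w) ⊔ Z) =
      (Rp y x Z - Rp y w Z * Rp x w Z) /
        (Real.sqrt (1 - Rp y w Z ^ 2) * Real.sqrt (1 - Rp x w Z ^ 2)) := by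
  have hres_y := resid_sup_span Z w hw y
  have hres_x := resid_sup_span Z w hw x
  set a := resid Z y with ha
  set b := resid Z x with hb
  set c := resid Z w with hc
  set u := resid ((ℝ ∙ w) ⊔ Z) y with hu
  set v := resid ((ℝ ∙ w) ⊔ Z) x with hv
  have hA : ‖a‖ ≠ 0 := norm_ne_zero_iff.2 hy
  have hB : ‖b‖ ≠ 0 := norm_ne_zero_iff.2 hx
  have hC : ‖c‖ ≠ 0 := norm_ne_zero_iff.2 hw
  have hU : ‖u‖ ≠ 0 := norm_ne_zero_iff.2 hy2
  have hV : ‖v‖ ≠ 0 := norm_ne_zero_iff.2 hx2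
  have hcc : ⟪c, c⟫ = ‖c‖ ^ 2 := real_inner_self_eq_norm_sq c
  have huv : ⟪u, v⟫ = ⟪a, b⟫ - ⟪a, c⟫ * ⟪b, c⟫ / ‖c‖ ^ 2 := by
    rw [hres_y, hres_x]
    simp only [inner_sub_left, inner_sub_right, inner_smul_left, inner_smul_right,
      RCLike.star_def, conj_trivial, real_inner_comm c b, real_inner_comm c a, hcc]
    field_simp
    ring
  have hu2 : ‖u‖ ^ 2 = ‖a‖ ^ 2 - ⟪a, c⟫ ^ 2 / ‖c‖ ^ 2 := by
    rw [← real_inner_self_eq_norm_sq, ← real_inner_self_eq_norm_sq, hres_y]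
    simp only [inner_sub_left, inner_sub_right, inner_smul_left, inner_smul_right,
      RCLike.star_def, conj_trivial, real_inner_comm c a, hcc]
    field_simp
    ring
  have hv2 : ‖v‖ ^ 2 = ‖b‖ ^ 2 - ⟪b, c⟫ ^ 2 / ‖c‖ ^ 2 := by
    rw [← real_inner_self_eq_norm_sq, ← real_inner_self_eq_norm_sq, hres_x]
    simp only [inner_sub_left, inner_sub_right, inner_smul_left, inner_smul_right,
      RCLike.star_def, conj_trivial, real_inner_comm c b, hcc]
    field_simp
    ring
  have h1y : 1 - Rp y w Z ^ 2 = (‖u‖ / ‖a‖) ^ 2 := by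
    simp only [Rp, ← ha, ← hc]
    rw [div_pow, div_pow, hu2]
    field_simp
  have h1x : 1 - Rp x w Z ^ 2 = (‖v‖ / ‖b‖) ^ 2 := by
    simp only [Rp, ← hb, ← hc]
    rw [div_pow, div_pow, hv2]
    field_simp
  have hsy : Real.sqrt (1 - Rp y w Z ^ 2) = ‖u‖ / ‖a‖ := by
    rw [h1y, Real.sqrt_sq (by positivity)]
  have hsx : Real.sqrt (1 - Rp x w Z ^ 2) = ‖v‖ / ‖b‖ := by
    rw [h1x, Real.sqrt_sq (by positivity)]
  rw [hsy, hsx]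
  simp only [Rp, ← ha, ← hb, ← hc, ← hu, ← hv, huv]
  field_simp
end
end

section
/- Relation between the TSLS and OLS estimands: let H be a real Hilbert space, X a complete subspace, and y, d, z ∈ H such that y^{⊥X}, d^{⊥X}, z^{⊥X} are nonzero, ⟨d^{⊥X}, z^{⊥X}⟩ ≠ 0, d^{⊥X+span(z)} ≠ 0, y^{⊥X+span(z)+span(d)} ≠ 0, and z^{⊥X+span(d)} ≠ 0. Then the TSLS estimand β_{TSLS} := ⟨y^{⊥X}, z^{⊥X}⟩/⟨d^{⊥X}, z^{⊥X}⟩ satisfies β_{TSLS} = β_{y∼d|X+span(z)} + (f_{y∼z|X+span(d)}/R_{d∼z|X})·σ_{y∼X+span(z)+span(d)}/σ_{d∼X+span(z)}. -/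
/-!
R²-calculus in real Hilbert spaces (Freidling & Zhao, "Optimization-based
Sensitivity Analysis for Unmeasured Confounding using Partial Correlations").
-/

noncomputable section

open Submodule RealInnerProductSpace

variable {H : Type*} [NormedAddCommGroup H] [InnerProductSpace ℝ H]

lemma resid_inner_mem (M : Submodule ℝ H) [HasOrthogonalProjection M] (h : H)
    {w : H} (hw : w ∈ M) : ⟪resid M h, w⟫ = 0 := by
  rw [real_inner_comm]
  exact (Submodule.mem_orthogonal _ _).1 (sub_starProjection_mem_orthogonal h) w hw

lemma resid_inner_resid (M : Submodule ℝ H) [HasOrthogonalProjection M] (h u : H) :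
    ⟪resid M h, u⟫ = ⟪resid M h, resid M u⟫ := by
  have h1 : ⟪resid M h, u⟫ = ⟪resid M h, u - (orthogonalProjection M u : H)⟫
      + ⟪resid M h, (orthogonalProjection M u : H)⟫ := by rw [inner_sub_right]; ring
  rw [h1, resid_inner_mem M h (orthogonalProjection M u).2, add_zero]; rfl

lemma resid_inner_self (M : Submodule ℝ H) [HasOrthogonalProjection M] (u : H) :
    ⟪resid M u, u⟫ = ‖resid M u‖ ^ 2 := by
  rw [resid_inner_resid, real_inner_self_eq_norm_sq]

lemma resid_sup_singleton (M : Submodule ℝ H) [HasOrthogonalProjection M] (z : H)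
    [HasOrthogonalProjection (M ⊔ ℝ ∙ z)] (hz : resid M z ≠ 0) (h : H) :
    resid (M ⊔ ℝ ∙ z) h =
      resid M h - (⟪resid M h, resid M z⟫ / ‖resid M z‖ ^ 2) • resid M z := by
  have hnz : ‖resid M z‖ ≠ 0 := norm_ne_zero_iff.2 hz
  set c : ℝ := ⟪resid M h, resid M z⟫ / ‖resid M z‖ ^ 2 with hc
  have hrz : resid M z = z - (orthogonalProjection M z : H) := rfl
  have hmem : (orthogonalProjection M h : H) + c • resid M z ∈ M ⊔ ℝ ∙ z := by
    refine Submodule.add_mem _ (Submodule.mem_sup_left (orthogonalProjection M h).2) ?_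
    refine Submodule.smul_mem _ _ ?_
    rw [hrz]
    exact Submodule.sub_mem _ (Submodule.mem_sup_right (Submodule.mem_span_singleton_self z))
      (Submodule.mem_sup_left (orthogonalProjection M z).2)
  have hkey : h - ((orthogonalProjection M h : H) + c • resid M z)
      = resid M h - c • resid M z := by
    simp only [resid]; abel
  have hproj : (orthogonalProjection (M ⊔ ℝ ∙ z) h : H)
      = (orthogonalProjection M h : H) + c • resid M z := by
    apply eq_starProjection_of_mem_of_inner_eq_zero hmem
    intro w hw
    rcases Submodule.mem_sup.1 hw with ⟨m, hm, s, hs, rfl⟩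
    rcases Submodule.mem_span_singleton.1 hs with ⟨t, rfl⟩
    rw [hkey]
    simp only [inner_add_right, inner_sub_left, inner_smul_left, inner_smul_right,
      RCLike.ofReal_real_eq_id, id_eq, conj_trivial]
    rw [resid_inner_mem M h hm, resid_inner_mem M z hm,
      resid_inner_resid M h z, resid_inner_self M z, hc]
    field_simp
    ring
  rw [resid, hproj, hkey]

lemma resid_ne_zero_of_le {M N : Submodule ℝ H} [HasOrthogonalProjection M]
    [HasOrthogonalProjection N] (hMN : M ≤ N) {y : H} (hy : resid N y ≠ 0) :
    resid M y ≠ 0 := by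
  intro h0
  apply hy
  have hyM : y ∈ M := by
    have : (orthogonalProjection M y : H) = y := (sub_eq_zero.1 h0).symm
    rw [← this]; exact (orthogonalProjection M y).2
  have : (orthogonalProjection N y : H) = y :=
    starProjection_eq_self_iff.2 (hMN hyM)
  simp [resid, this]

lemma key_alg (a b c nz nd nv nw nr ny : ℝ) (hb : b ≠ 0) (hz : nz ≠ 0) (hd : nd ≠ 0)
    (hv : nv ≠ 0) (hw : nw ≠ 0) (hr : nr ≠ 0) (hy : ny ≠ 0)
    (h1 : nv ^ 2 = nd ^ 2 - b ^ 2 / nz ^ 2)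
    (h2 : nw * nd = nv * nz) :
    a / b = (c - a * b / nz ^ 2) / nv ^ 2 +
      ((a - c * b / nd ^ 2) / (ny * nw) / (nr / ny)) / (b / (nd * nz)) * (nr / nv) := by
  have hw' : nw = nv * nz / nd := by field_simp at h2 ⊢; linarith
  subst hw'
  have h1' : nv ^ 2 * nz ^ 2 = nd ^ 2 * nz ^ 2 - b ^ 2 := by
    field_simp at h1; linarith
  field_simp
  linear_combination a * h1'

lemma key_sqrt (a b c Y Z D : ℝ) (hZ : Z ≠ 0) (hD : D ≠ 0)
    (h1 : D * Y - c ^ 2 ≠ 0) (h2 : D * Z - b ^ 2 ≠ 0) :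
    1 - (a - c * b / D) ^ 2 / ((Y - c ^ 2 / D) * (Z - b ^ 2 / D)) =
      ((Y - a ^ 2 / Z) - (c - a * b / Z) ^ 2 / (D - b ^ 2 / Z)) / (Y - c ^ 2 / D) := by
  rw [show Y - c ^ 2 / D = (D * Y - c ^ 2) / D  by field_simp; try ring,
    show Z - b ^ 2 / D = (D * Z - b ^ 2) / D  by field_simp; try ring,
    show D - b ^ 2 / Z = (D * Z - b ^ 2) / Z  by field_simp; try ring,
    show Y - a ^ 2 / Z = (Z * Y - a ^ 2) / Z  by field_simp; try ring,
    show a - c * b / D = (D * a - c * b) / D  by field_simp; try ring,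
    show c - a * b / Z = (Z * c - a * b) / Z by field_simp; try ring]
  field_simp
  ring

lemma inner_proj_expand (p q r : H) (hq : ‖q‖ ≠ 0) :
    ⟪p - (⟪p, q⟫ / ‖q‖ ^ 2) • q, r - (⟪r, q⟫ / ‖q‖ ^ 2) • q⟫
      = ⟪p, r⟫ - ⟪p, q⟫ * ⟪r, q⟫ / ‖q‖ ^ 2 := by
  simp only [inner_sub_left, inner_sub_right, inner_smul_left, inner_smul_right,
    RCLike.ofReal_real_eq_id, id_eq, conj_trivial]
  rw [real_inner_self_eq_norm_sq, real_inner_comm q r, real_inner_comm q p]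
  field_simp
  ring

/-- relation between the TSLS and OLS estimands. -/
theorem tsls_ols_relation [CompleteSpace H]
    (X : Submodule ℝ H) [CompleteSpace X] (y d z : H)
    [CompleteSpace ↥(X ⊔ (ℝ ∙ z))] [CompleteSpace ↥(X ⊔ (ℝ ∙ d))]
    [CompleteSpace ↥(X ⊔ (ℝ ∙ z) ⊔ (ℝ ∙ d))]
    (hy : resid X y ≠ 0) (hd : resid X d ≠ 0) (hz : resid X z ≠ 0)
    (hdz : ⟪resid X d, resid X z⟫ ≠ 0)
    (hd2 : resid (X ⊔ (ℝ ∙ z)) d ≠ 0)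
    (hy3 : resid (X ⊔ (ℝ ∙ z) ⊔ (ℝ ∙ d)) y ≠ 0)
    (hz2 : resid (X ⊔ (ℝ ∙ d)) z ≠ 0) :
    ⟪resid X y, resid X z⟫ / ⟪resid X d, resid X z⟫ =
      betaReg y d (X ⊔ (ℝ ∙ z)) +
        fp y z (X ⊔ (ℝ ∙ d)) / Rp d z X *
          (sigv y (X ⊔ (ℝ ∙ z) ⊔ (ℝ ∙ d)) / sigv d (X ⊔ (ℝ ∙ z))) := by
  have hnz : ‖resid X z‖ ≠ 0 := norm_ne_zero_iff.2 hz
  have hnd : ‖resid X d‖ ≠ 0 := norm_ne_zero_iff.2 hd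
  have hnv : ‖resid (X ⊔ (ℝ ∙ z)) d‖ ≠ 0 := norm_ne_zero_iff.2 hd2
  have hnw : ‖resid (X ⊔ (ℝ ∙ d)) z‖ ≠ 0 := norm_ne_zero_iff.2 hz2
  have hnr : ‖resid (X ⊔ (ℝ ∙ z) ⊔ (ℝ ∙ d)) y‖ ≠ 0 := norm_ne_zero_iff.2 hy3
  have hle : X ⊔ (ℝ ∙ d) ≤ X ⊔ (ℝ ∙ z) ⊔ (ℝ ∙ d) :=
    sup_le ((le_sup_left : X ≤ X ⊔ (ℝ ∙ z)).trans le_sup_left) le_sup_right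
  have hny : ‖resid (X ⊔ (ℝ ∙ d)) y‖ ≠ 0 :=
    norm_ne_zero_iff.2 (resid_ne_zero_of_le hle hy3)
  have hU := resid_sup_singleton X z hz y
  have hV := resid_sup_singleton X z hz d
  have hY' := resid_sup_singleton X d hd y
  have hW := resid_sup_singleton X d hd z
  have hR := resid_sup_singleton (X ⊔ (ℝ ∙ z)) d hd2 y
  -- scalar abbreviations (as plain terms)
  have euv : ⟪resid (X ⊔ (ℝ ∙ z)) y, resid (X ⊔ (ℝ ∙ z)) d⟫
      = ⟪resid X y, resid X d⟫
        - ⟪resid X y, resid X z⟫ * ⟪resid X d, resid X z⟫ / ‖resid X z‖ ^ 2 := by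
    rw [hU, hV, inner_proj_expand _ _ _ hnz]
  have ev2 : ‖resid (X ⊔ (ℝ ∙ z)) d‖ ^ 2
      = ‖resid X d‖ ^ 2 - ⟪resid X d, resid X z⟫ ^ 2 / ‖resid X z‖ ^ 2 := by
    rw [← real_inner_self_eq_norm_sq, hV, inner_proj_expand _ _ _ hnz,
      real_inner_self_eq_norm_sq]
    ring
  have eu2 : ‖resid (X ⊔ (ℝ ∙ z)) y‖ ^ 2
      = ‖resid X y‖ ^ 2 - ⟪resid X y, resid X z⟫ ^ 2 / ‖resid X z‖ ^ 2 := by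
    rw [← real_inner_self_eq_norm_sq, hU, inner_proj_expand _ _ _ hnz,
      real_inner_self_eq_norm_sq]
    ring
  have ey2 : ‖resid (X ⊔ (ℝ ∙ d)) y‖ ^ 2
      = ‖resid X y‖ ^ 2 - ⟪resid X y, resid X d⟫ ^ 2 / ‖resid X d‖ ^ 2 := by
    rw [← real_inner_self_eq_norm_sq, hY', inner_proj_expand _ _ _ hnd,
      real_inner_self_eq_norm_sq]
    ring
  have ew2 : ‖resid (X ⊔ (ℝ ∙ d)) z‖ ^ 2
      = ‖resid X z‖ ^ 2 - ⟪resid X d, resid X z⟫ ^ 2 / ‖resid X d‖ ^ 2 := by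
    rw [← real_inner_self_eq_norm_sq, hW, inner_proj_expand _ _ _ hnd,
      real_inner_self_eq_norm_sq, real_inner_comm (resid X z) (resid X d)]
    ring
  have eyw : ⟪resid (X ⊔ (ℝ ∙ d)) y, resid (X ⊔ (ℝ ∙ d)) z⟫
      = ⟪resid X y, resid X z⟫
        - ⟪resid X y, resid X d⟫ * ⟪resid X d, resid X z⟫ / ‖resid X d‖ ^ 2 := by
    rw [hY', hW, inner_proj_expand _ _ _ hnd, real_inner_comm (resid X z) (resid X d)]
  have er2 : ‖resid (X ⊔ (ℝ ∙ z) ⊔ (ℝ ∙ d)) y‖ ^ 2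
      = ‖resid (X ⊔ (ℝ ∙ z)) y‖ ^ 2
        - ⟪resid (X ⊔ (ℝ ∙ z)) y, resid (X ⊔ (ℝ ∙ z)) d⟫ ^ 2
          / ‖resid (X ⊔ (ℝ ∙ z)) d‖ ^ 2 := by
    rw [← real_inner_self_eq_norm_sq, hR, inner_proj_expand _ _ _ hnv,
      real_inner_self_eq_norm_sq]
    ring
  have hZ2 : ‖resid X z‖ ^ 2 ≠ 0 := pow_ne_zero _ hnz
  have hD2 : ‖resid X d‖ ^ 2 ≠ 0 := pow_ne_zero _ hnd
  have h1 : ‖resid X d‖ ^ 2 * ‖resid X y‖ ^ 2 - ⟪resid X y, resid X d⟫ ^ 2 ≠ 0 := by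
    have e : ‖resid X d‖ ^ 2 * ‖resid X y‖ ^ 2 - ⟪resid X y, resid X d⟫ ^ 2
        = ‖resid X d‖ ^ 2 * ‖resid (X ⊔ (ℝ ∙ d)) y‖ ^ 2 := by
      rw [ey2]; field_simp; try ring
    rw [e]
    exact mul_ne_zero hD2 (pow_ne_zero _ hny)
  have h2 : ‖resid X d‖ ^ 2 * ‖resid X z‖ ^ 2 - ⟪resid X d, resid X z⟫ ^ 2 ≠ 0 := by
    have e : ‖resid X d‖ ^ 2 * ‖resid X z‖ ^ 2 - ⟪resid X d, resid X z⟫ ^ 2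
        = ‖resid X d‖ ^ 2 * ‖resid (X ⊔ (ℝ ∙ d)) z‖ ^ 2 := by
      rw [ew2]; field_simp; try ring
    rw [e]
    exact mul_ne_zero hD2 (pow_ne_zero _ hnw)
  have hs1 : 1 - Rp y z (X ⊔ (ℝ ∙ d)) ^ 2
      = ‖resid (X ⊔ (ℝ ∙ z) ⊔ (ℝ ∙ d)) y‖ ^ 2 / ‖resid (X ⊔ (ℝ ∙ d)) y‖ ^ 2 := by
    simp only [Rp]
    rw [div_pow, mul_pow, eyw, ey2, ew2, er2, eu2, euv, ev2]
    exact key_sqrt _ _ _ _ _ _ hZ2 hD2 h1 h2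
  have hs2 : Real.sqrt (1 - Rp y z (X ⊔ (ℝ ∙ d)) ^ 2)
      = ‖resid (X ⊔ (ℝ ∙ z) ⊔ (ℝ ∙ d)) y‖ / ‖resid (X ⊔ (ℝ ∙ d)) y‖ := by
    rw [hs1, ← div_pow, Real.sqrt_sq (by positivity)]
  have hnwd : ‖resid (X ⊔ (ℝ ∙ d)) z‖ * ‖resid X d‖
      = ‖resid (X ⊔ (ℝ ∙ z)) d‖ * ‖resid X z‖ := by
    have hsq : (‖resid (X ⊔ (ℝ ∙ d)) z‖ * ‖resid X d‖) ^ 2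
        = (‖resid (X ⊔ (ℝ ∙ z)) d‖ * ‖resid X z‖) ^ 2 := by
      rw [mul_pow, mul_pow, ew2, ev2]
      field_simp
    have := congrArg Real.sqrt hsq
    rwa [Real.sqrt_sq (by positivity), Real.sqrt_sq (by positivity)] at this
  simp only [betaReg, fp, sigv]
  rw [hs2]
  simp only [Rp]
  rw [euv, eyw]
  exact key_alg _ _ _ _ _ _ _ _ _ hdz hnz hnd hnv hnw hnr hny ev2 hnwd
end
end

section
/- Bias bound under a multi-dimensional unmeasured confounder (Proposition 2): let H be a real Hilbert space, W a complete subspace, U a finite-dimensional subspace, and y, d ∈ H such that d^{⊥W} ≠ 0, d^{⊥W+U} ≠ 0, y^{⊥W+span(d)} ≠ 0, and R²_{d∼U|W} < 1. Then (β_{y∼d|W} − β_{y∼d|W+U})² ≤ R²_{y∼U|W+span(d)}·f²_{d∼U|W}·σ²_{y∼W+span(d)}/σ²_{d∼W}, i.e. |β_{y∼d|W} − β_{y∼d|W+U}| ≤ √(R²_{y∼U|W+span(d)}·f²_{d∼U|W})·σ_{y∼W+span(d)}/σ_{d∼W}. -/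
/-!
R²-calculus in real Hilbert spaces (Freidling & Zhao, "Optimization-based
Sensitivity Analysis for Unmeasured Confounding using Partial Correlations").
-/

noncomputable section

open Submodule RealInnerProductSpace

variable {H : Type*} [NormedAddCommGroup H] [InnerProductSpace ℝ H]

/-- The partial f²-value `f²_{y∼X|M} = R²_{y∼X|M}/(1 − R²_{y∼X|M})`. -/
def f2p (y : H) (X M : Submodule ℝ H) [HasOrthogonalProjection (X ⊔ M)]
    [HasOrthogonalProjection M] : ℝ :=
  R2p y X M / (1 - R2p y X M)

section Aux
variable {M : Submodule ℝ H} [HasOrthogonalProjection M]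

lemma resid_inner_eq_zero (h : H) {m : H} (hm : m ∈ M) : ⟪resid M h, m⟫ = 0 := by
  have h1 := sub_starProjection_mem_orthogonal (K := M) h
  have := (Submodule.mem_orthogonal M _).1 h1 m hm
  rw [real_inner_comm]; exact this

lemma sub_resid_mem (h : H) : h - resid M h ∈ M := by
  simp [resid]

lemma resid_unique {h v : H} (h1 : h - v ∈ M) (h2 : ∀ m ∈ M, ⟪v, m⟫ = 0) :
    resid M h = v := by
  have hm : resid M h - v ∈ M := by
    have := M.sub_mem h1 (sub_resid_mem (M := M) h)
    simpa using this
  have hz : ⟪resid M h - v, resid M h - v⟫ = 0 := by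
    rw [inner_sub_left, resid_inner_eq_zero h hm, h2 _ hm, sub_zero]
  exact sub_eq_zero.1 (inner_self_eq_zero.1 hz)

lemma resid_congr {M N : Submodule ℝ H} [HasOrthogonalProjection M]
    [HasOrthogonalProjection N] (h : M = N) (x : H) : resid M x = resid N x := by
  subst h; rfl
end Aux

set_option maxHeartbeats 1000000 in
/-- bias bound under a multi-dimensional unmeasured confounder
(Proposition 2). -/
theorem ols_bias_bound_multi_confounder [CompleteSpace H]
    (W U : Submodule ℝ H) [CompleteSpace W] [FiniteDimensional ℝ U] (y d : H)
    [CompleteSpace ↥(W ⊔ U)] [CompleteSpace ↥(W ⊔ (ℝ ∙ d))]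
    [CompleteSpace ↥(U ⊔ (W ⊔ (ℝ ∙ d)))] [CompleteSpace ↥(U ⊔ W)]
    (hd : resid W d ≠ 0) (hd2 : resid (W ⊔ U) d ≠ 0)
    (hy : resid (W ⊔ (ℝ ∙ d)) y ≠ 0) (hR : R2p d U W < 1) :
    (betaReg y d W - betaReg y d (W ⊔ U)) ^ 2 ≤
      R2p y U (W ⊔ (ℝ ∙ d)) * f2p d U W * (sigv y (W ⊔ (ℝ ∙ d)) ^ 2 / sigv d W ^ 2) := by
  have hyne : y ≠ 0 := fun h => hy (by simp [h, resid])
  have hdne : d ≠ 0 := fun h => hd (by simp [h, resid])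
  set Z := W ⊔ (ℝ ∙ d) with hZdef
  set dW := resid W d with hdWdef
  set dQ := resid (W ⊔ U) d with hdQdef
  set e := resid Z y with hedef
  set yW := resid W y with hyWdef
  set b1 := betaReg y d W with hb1def
  have hdW2 : (0:ℝ) < ‖dW‖ ^ 2 := pow_pos (norm_pos_iff.mpr hd) 2
  have hdQ2 : (0:ℝ) < ‖dQ‖ ^ 2 := pow_pos (norm_pos_iff.mpr hd2) 2
  have he2 : (0:ℝ) < ‖e‖ ^ 2 := pow_pos (norm_pos_iff.mpr hy) 2
  have hy2 : (0:ℝ) < ‖y‖ ^ 2 := pow_pos (norm_pos_iff.mpr hyne) 2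
  have hd2' : (0:ℝ) < ‖d‖ ^ 2 := pow_pos (norm_pos_iff.mpr hdne) 2
  -- memberships
  have hWZ : W ≤ Z := le_sup_left
  have hdZ : d ∈ Z := (le_sup_right : (ℝ ∙ d) ≤ Z) (mem_span_singleton_self d)
  have hddW : d - dW ∈ W := sub_resid_mem d
  have hdWZ : dW ∈ Z := by
    have := Z.sub_mem hdZ (hWZ hddW); simpa using this
  set g := dW - dQ with hgdef
  have hgWU : g ∈ W ⊔ U := by
    have h1 : d - dQ ∈ W ⊔ U := sub_resid_mem d
    have h2 : d - dW ∈ W ⊔ U := (le_sup_left : W ≤ W ⊔ U) hddW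
    have := (W ⊔ U).sub_mem h1 h2
    simpa [hgdef, sub_sub_sub_cancel_left] using this
  have hUZ : W ⊔ U ≤ U ⊔ Z := sup_le (le_trans hWZ le_sup_right) le_sup_left
  have hZUZ : Z ≤ U ⊔ Z := le_sup_right
  -- basic orthogonality
  have hdQg : ⟪dQ, g⟫ = 0 := resid_inner_eq_zero d hgWU
  have hgdQ : ⟪g, dQ⟫ = 0 := by rw [real_inner_comm]; exact hdQg
  have hgW : ∀ w ∈ W, ⟪g, w⟫ = 0 := by
    intro w hw
    have h1 : ⟪dW, w⟫ = 0 := resid_inner_eq_zero d hw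
    have h2 : ⟪dQ, w⟫ = 0 := resid_inner_eq_zero d ((le_sup_left : W ≤ W ⊔ U) hw)
    rw [hgdef, inner_sub_left, h1, h2, sub_zero]
  have hgdW : ⟪g, dW⟫ = ‖g‖ ^ 2 := by
    have : (dW : H) = dQ + g := by rw [hgdef]; abel
    rw [this, inner_add_right, hgdQ, real_inner_self_eq_norm_sq, zero_add]
  -- a helper: vectors orthogonal to W and to dW are orthogonal to Z
  have horthZ : ∀ v : H, (∀ w ∈ W, ⟪v, w⟫ = 0) → ⟪v, dW⟫ = 0 → ∀ m ∈ Z, ⟪v, m⟫ = 0 := by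
    intro v hvW hvdW m hm
    rcases Submodule.mem_sup.1 hm with ⟨w, hw, z, hz, rfl⟩
    rcases Submodule.mem_span_singleton.1 hz with ⟨c, rfl⟩
    have hvd : ⟪v, d⟫ = 0 := by
      have : (d : H) = dW + (d - dW) := by abel
      rw [this, inner_add_right, hvdW, hvW _ hddW, add_zero]
    rw [inner_add_right, hvW _ hw, inner_smul_right, hvd, mul_zero, add_zero]
  -- Pythagoras for dW = dQ + g
  have hPyth : ‖dW‖ ^ 2 = ‖dQ‖ ^ 2 + ‖g‖ ^ 2 := by
    have h : (dW : H) = dQ + g := by rw [hgdef]; abel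
    rw [h, norm_add_sq_real, hdQg]; ring
  -- e = yW - b1 • dW
  have hb1mul : b1 * ‖dW‖ ^ 2 = ⟪yW, dW⟫ := by
    rw [hb1def, betaReg, ← hyWdef, ← hdWdef, div_mul_cancel₀]
    exact ne_of_gt hdW2
  have heeq : e = yW - b1 • dW := by
    rw [hedef]
    apply resid_unique
    · have h1 : y - yW ∈ W := sub_resid_mem y
      have : y - (yW - b1 • dW) = (y - yW) + b1 • dW := by abel
      rw [this]
      exact Z.add_mem (hWZ h1) (Z.smul_mem _ hdWZ)
    · apply horthZ
      · intro w hw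
        have h1 : ⟪yW, w⟫ = 0 := resid_inner_eq_zero y hw
        have h2 : ⟪dW, w⟫ = 0 := resid_inner_eq_zero d hw
        rw [inner_sub_left, h1, inner_smul_left, h2]; simp
      · rw [inner_sub_left, inner_smul_left, real_inner_self_eq_norm_sq]
        simp only [RCLike.star_def, starRingEnd_apply, star_trivial]
        rw [← hb1mul]; ring
  have hedW : ⟪e, dW⟫ = 0 := by
    rw [heeq, inner_sub_left, inner_smul_left, real_inner_self_eq_norm_sq]
    simp only [starRingEnd_apply, star_trivial]
    rw [← hb1mul]; ring
  have heW : ∀ w ∈ W, ⟪e, w⟫ = 0 := by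
    intro w hw
    rw [heeq, inner_sub_left, resid_inner_eq_zero y hw, inner_smul_left,
      resid_inner_eq_zero d hw]; simp
  -- bias formula
  have hdWdQ : ⟪dW, dQ⟫ = ‖dQ‖ ^ 2 := by
    have h : (dW : H) = dQ + g := by rw [hgdef]; abel
    rw [h, inner_add_left, hgdQ, real_inner_self_eq_norm_sq, add_zero]
  have hedQ : ⟪e, dQ⟫ = -⟪e, g⟫ := by
    have h : (dQ : H) = dW - g := by rw [hgdef]; abel
    rw [h, inner_sub_right, hedW, zero_sub]
  have hyQdQ : ⟪resid (W ⊔ U) y, dQ⟫ = -⟪e, g⟫ + b1 * ‖dQ‖ ^ 2 := by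
    have h1 : ⟪resid (W ⊔ U) y, dQ⟫ = ⟪y, dQ⟫ := by
      have hm : y - resid (W ⊔ U) y ∈ W ⊔ U := sub_resid_mem y
      have : ⟪dQ, y - resid (W ⊔ U) y⟫ = 0 := resid_inner_eq_zero d hm
      rw [real_inner_comm] at this
      rw [inner_sub_left] at this
      linarith
    have h2 : ⟪y, dQ⟫ = ⟪yW, dQ⟫ := by
      have hm : y - yW ∈ W ⊔ U := (le_sup_left : W ≤ W ⊔ U) (sub_resid_mem y)
      have : ⟪dQ, y - yW⟫ = 0 := resid_inner_eq_zero d hm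
      rw [real_inner_comm, inner_sub_left] at this
      linarith
    have h3 : (yW : H) = e + b1 • dW := by rw [heeq]; abel
    rw [h1, h2, h3, inner_add_left, inner_smul_left, hdWdQ, hedQ]
    simp only [starRingEnd_apply, star_trivial]
  have hbias : b1 - betaReg y d (W ⊔ U) = ⟪e, g⟫ / ‖dQ‖ ^ 2 := by
    rw [betaReg, ← hdQdef, hyQdQ]
    field_simp
    ring
  -- projection of e onto U ⊔ Z
  set r := resid (U ⊔ Z) e with hrdef
  set p := e - r with hpdef
  have hpmem : p ∈ U ⊔ Z := sub_resid_mem e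
  have hrorth : ∀ m ∈ U ⊔ Z, ⟪r, m⟫ = 0 := fun m hm => resid_inner_eq_zero e hm
  have hporthZ : ∀ m ∈ Z, ⟪p, m⟫ = 0 := by
    intro m hm
    have h1 : ⟪e, m⟫ = 0 := resid_inner_eq_zero y hm
    have h2 : ⟪r, m⟫ = 0 := hrorth m (hZUZ hm)
    rw [hpdef, inner_sub_left, h1, h2, sub_zero]
  -- key inner product identity
  have hkeyinner : ⟪e, g⟫ = ⟪p, resid Z g⟫ := by
    have h1 : ⟪e, g⟫ = ⟪p, g⟫ := by
      have h2 : ⟪r, g⟫ = 0 := hrorth g (hUZ hgWU)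
      have : (e : H) = p + r := by rw [hpdef]; abel
      rw [this, inner_add_left, h2, add_zero]
    have h3 : ⟪p, g - resid Z g⟫ = 0 := hporthZ _ (sub_resid_mem g)
    rw [inner_sub_right] at h3
    rw [h1]; linarith
  -- norm of resid Z g
  have hgz : resid Z g = g - (‖g‖ ^ 2 / ‖dW‖ ^ 2) • dW := by
    apply resid_unique
    · have : g - (g - (‖g‖ ^ 2 / ‖dW‖ ^ 2) • dW) = (‖g‖ ^ 2 / ‖dW‖ ^ 2) • dW := by abel
      rw [this]; exact Z.smul_mem _ hdWZ
    · apply horthZ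
      · intro w hw
        rw [inner_sub_left, hgW _ hw, inner_smul_left, resid_inner_eq_zero d hw]; simp
      · rw [inner_sub_left, inner_smul_left, real_inner_self_eq_norm_sq, hgdW]
        simp only [starRingEnd_apply, star_trivial]
        field_simp
        ring
  have hgznorm : ‖resid Z g‖ ^ 2 = ‖g‖ ^ 2 * ‖dQ‖ ^ 2 / ‖dW‖ ^ 2 := by
    rw [hgz, norm_sub_sq_real, inner_smul_right, hgdW, norm_smul, Real.norm_eq_abs, mul_pow, sq_abs,
      div_pow]
    rw [hPyth]
    field_simp
    ring
  -- R2p y U Z = ‖p‖²/‖e‖²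
  have hrY : resid (U ⊔ Z) y = r := by
    apply resid_unique
    · have h1 : y - e ∈ Z := sub_resid_mem y
      have h2 : e - r ∈ U ⊔ Z := hpmem
      have : y - r = (y - e) + (e - r) := by abel
      rw [this]
      exact (U ⊔ Z).add_mem (hZUZ h1) h2
    · exact hrorth
  have hepr : ‖e‖ ^ 2 = ‖p‖ ^ 2 + ‖r‖ ^ 2 := by
    have h1 : ⟪p, r⟫ = 0 := by
      rw [real_inner_comm]; exact hrorth p hpmem
    have : (e : H) = p + r := by rw [hpdef]; abel
    rw [this, norm_add_sq_real, h1]; ring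
  have hR2p : R2p y U Z = ‖p‖ ^ 2 / ‖e‖ ^ 2 := by
    rw [R2p, R2, R2, hrY, ← hedef, hepr]
    field_simp
    congr 1 <;> ring
  -- f2p d U W = ‖g‖²/‖dQ‖²
  have hQcomm : resid (U ⊔ W) d = dQ := resid_congr (sup_comm U W) d
  have hsum : ‖dQ‖ ^ 2 + ‖g‖ ^ 2 ≠ 0 := by rw [← hPyth]; exact ne_of_gt hdW2
  have hR2pd : R2p d U W = ‖g‖ ^ 2 / ‖dW‖ ^ 2 := by
    rw [R2p, R2, R2, hQcomm, ← hdWdef, hPyth]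
    field_simp
    have hden : ‖d‖ ^ 2 - (‖d‖ ^ 2 - (‖dQ‖ ^ 2 + ‖g‖ ^ 2)) = ‖dQ‖ ^ 2 + ‖g‖ ^ 2 := by ring
    rw [hden, mul_div_cancel_left₀ _ hsum]; ring
  have hf2p : f2p d U W = ‖g‖ ^ 2 / ‖dQ‖ ^ 2 := by
    rw [f2p, hR2pd]
    have h1 : 1 - ‖g‖ ^ 2 / ‖dW‖ ^ 2 = ‖dQ‖ ^ 2 / ‖dW‖ ^ 2 := by
      rw [hPyth]; field_simp; ring
    rw [h1]; field_simp
  -- key Cauchy-Schwarz bound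
  have hkey : ⟪e, g⟫ ^ 2 ≤ ‖p‖ ^ 2 * (‖g‖ ^ 2 * ‖dQ‖ ^ 2 / ‖dW‖ ^ 2) := by
    rw [hkeyinner, ← hgznorm]
    have := real_inner_mul_inner_self_le p (resid Z g)
    rw [real_inner_self_eq_norm_sq, real_inner_self_eq_norm_sq] at this
    nlinarith [this]
  -- conclude
  rw [hbias, hR2p, hf2p, sigv, sigv, ← hedef, ← hdWdef]
  calc (⟪e, g⟫ / ‖dQ‖ ^ 2) ^ 2 = ⟪e, g⟫ ^ 2 / (‖dQ‖ ^ 2) ^ 2 := by rw [div_pow]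
    _ ≤ (‖p‖ ^ 2 * (‖g‖ ^ 2 * ‖dQ‖ ^ 2 / ‖dW‖ ^ 2)) / (‖dQ‖ ^ 2) ^ 2 := by gcongr
    _ = ‖p‖ ^ 2 / ‖e‖ ^ 2 * (‖g‖ ^ 2 / ‖dQ‖ ^ 2) * (‖e‖ ^ 2 / ‖dW‖ ^ 2) := by
        field_simp
end
end
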